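/- arXiv:2009.14559 — 3 statements merged into one kernel-verified Lean document; each statement's English description precedes it below -/
import Mathlib

section
/- For constant market coefficients, the log-utility expected terminal wealth functional π ↦ E[log X^π_T] = log x₀ + T(r + πᵀ(μ - r𝟙_d) - ½‖σᵀπ‖²) over constant strategies π ∈ ℝ^d subject to ⟨π, 𝟙_d⟩ = h is uniquely maximized at π* = Aμ + hc, where A = Dᵀ(DΣDᵀ)⁻¹D, c = (I_d - AΣ)e_d, Σ = σσᵀ. -/
open Matrix

/-- For constant coefficients, the log-utility functional over constant strategies
with `⟨π,𝟙⟩ = h` is uniquely maximized at `π* = Aμ + hc`. -/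
theorem stmt13 (d m : ℕ) (hd : 2 ≤ d) (σ : Matrix (Fin d) (Fin m) ℝ)
    (S : Matrix (Fin d) (Fin d) ℝ) (hSdef : S = σ * σᵀ) (hS : S.PosDef)
    (r T x₀ h : ℝ) (hT : 0 < T) (hx : 0 < x₀) (hh : 0 < h) (μ : Fin d → ℝ)
    (D : Matrix (Fin (d - 1)) (Fin d) ℝ)
    (hD : ∀ i j, D i j =
      if (j : ℕ) = (i : ℕ) then 1 else if (j : ℕ) = d - 1 then -1 else 0)
    (A : Matrix (Fin d) (Fin d) ℝ) (hA : A = Dᵀ * (D * S * Dᵀ)⁻¹ * D)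
    (c : Fin d → ℝ)
    (hc : c = (1 - A * S) *ᵥ (fun j : Fin d => if (j : ℕ) = d - 1 then (1:ℝ) else 0))
    (F : (Fin d → ℝ) → ℝ)
    (hF : F = fun π => Real.log x₀ + T * (r + π ⬝ᵥ (μ - r • (1 : Fin d → ℝ)) -
      (1 / 2) * ((σᵀ *ᵥ π) ⬝ᵥ (σᵀ *ᵥ π))))
    (πstar : Fin d → ℝ) (hπ : πstar = A *ᵥ μ + h • c) :
    πstar ⬝ᵥ (fun _ => 1) = h ∧
    (∀ π : Fin d → ℝ, π ⬝ᵥ (fun _ => 1) = h → F π ≤ F πstar) ∧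
    (∀ π : Fin d → ℝ, π ⬝ᵥ (fun _ => 1) = h → F π = F πstar → π = πstar) := by
  have hd1 : d - 1 < d := by omega
  set jlast : Fin d := ⟨d - 1, hd1⟩ with hjlast
  set emb : Fin (d - 1) → Fin d := fun i => ⟨i.val, Nat.lt_of_lt_of_le i.isLt (Nat.sub_le d 1)⟩
    with hemb
  set e : Fin d → ℝ := fun j : Fin d => if (j : ℕ) = d - 1 then (1:ℝ) else 0 with he
  have hsym : Sᵀ = S := by rw [hSdef, transpose_mul, transpose_transpose]
  -- basic structure of rows of D
  have hDrow : ∀ (i : Fin (d - 1)) (u : Fin d → ℝ),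
      (D *ᵥ u) i = u (emb i) - u jlast := by
    intro i u
    have h1 : ∀ j : Fin d, D i j * u j =
        (if j = emb i then u j else 0) + (if j = jlast then -u j else 0) := by
      intro j
      rw [hD]
      have hi := i.isLt
      simp only [Fin.ext_iff]
      split_ifs <;> first | ring1 | (exfalso; simp_all [emb, jlast]; omega)
    show (∑ j, D i j * u j) = _
    rw [Finset.sum_congr rfl fun j _ => h1 j, Finset.sum_add_distrib,
      Finset.sum_ite_eq', Finset.sum_ite_eq']
    simp [sub_eq_add_neg]
  have hDTcol : ∀ (w : Fin (d - 1) → ℝ) (i : Fin (d - 1)),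
      (Dᵀ *ᵥ w) (emb i) = w i := by
    intro w i
    have h1 : ∀ i' : Fin (d - 1), Dᵀ (emb i) i' * w i' = if i' = i then w i' else 0 := by
      intro i'
      show D i' (emb i) * w i' = _
      rw [hD]
      have hi := i.isLt
      simp only [Fin.ext_iff]
      split_ifs <;> first | ring1 | (exfalso; simp_all [emb, jlast] <;> omega)
    show (∑ i', Dᵀ (emb i) i' * w i') = _
    rw [Finset.sum_congr rfl fun j _ => h1 j, Finset.sum_ite_eq']
    simp
  have hDTinj : ∀ w : Fin (d - 1) → ℝ, Dᵀ *ᵥ w = 0 → w = 0 := by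
    intro w hw
    funext i
    have := congrFun hw (emb i)
    rw [hDTcol] at this
    simpa using this
  have hD1 : D *ᵥ (fun _ => (1:ℝ)) = 0 := by
    funext i
    rw [hDrow]
    simp
  -- positive definiteness of D S Dᵀ
  have hMpos : (D * S * Dᵀ).PosDef := by
    refine posDef_iff_dotProduct_mulVec.mpr ⟨?_, ?_⟩
    · show (D * S * Dᵀ)ᴴ = D * S * Dᵀ
      rw [conjTranspose_eq_transpose_of_trivial]
      simp [transpose_mul, hsym, Matrix.mul_assoc]
    · intro x hx
      have hy : Dᵀ *ᵥ x ≠ 0 := fun h0 => hx (hDTinj x h0)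
      have hpos := (posDef_iff_dotProduct_mulVec.mp hS).2 (x := Dᵀ *ᵥ x) hy
      simp only [star_trivial] at hpos ⊢
      calc x ⬝ᵥ ((D * S * Dᵀ) *ᵥ x) = (Dᵀ *ᵥ x) ⬝ᵥ (S *ᵥ (Dᵀ *ᵥ x)) := by
            rw [← mulVec_mulVec, ← mulVec_mulVec, dotProduct_mulVec, ← mulVec_transpose]
        _ > 0 := hpos
  have hMunit : IsUnit (D * S * Dᵀ).det := hMpos.det_pos.ne'.isUnit
  have hinv : (D * S * Dᵀ) * (D * S * Dᵀ)⁻¹ = 1 := Matrix.mul_nonsing_inv _ hMunit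
  have hDSA : D * S * A = D := by
    rw [hA]
    simp only [← Matrix.mul_assoc]
    rw [hinv, Matrix.one_mul]
  -- ⟨π*, 𝟙⟩ = h
  have hA1 : ∀ v : Fin d → ℝ, (A *ᵥ v) ⬝ᵥ (fun _ => (1:ℝ)) = 0 := by
    intro v
    rw [hA, Matrix.mul_assoc, ← mulVec_mulVec, mulVec_transpose, ← dotProduct_mulVec,
      hD1, dotProduct_zero]
  have heq1 : ∀ j : Fin d, ((j : ℕ) = d - 1) ↔ j = jlast := by
    intro j
    constructor
    · intro hj; exact Fin.ext hj
    · intro hj; subst hj; rfl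
  have hcone : c ⬝ᵥ (fun _ => (1:ℝ)) = 1 := by
    rw [hc, sub_mulVec, one_mulVec, sub_dotProduct, ← mulVec_mulVec, hA1, sub_zero]
    simp only [dotProduct, he, heq1, mul_one]
    rw [Finset.sum_ite_eq']
    simp
  have hstar1 : πstar ⬝ᵥ (fun _ => (1:ℝ)) = h := by
    rw [hπ, add_dotProduct, smul_dotProduct, hA1, hcone]
    simp
  -- D S c = 0 and D (μ - S π*) = 0
  have hDSc : (D * S) *ᵥ c = 0 := by
    rw [hc, mulVec_mulVec, Matrix.mul_sub, Matrix.mul_one, ← Matrix.mul_assoc, hDSA,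
      sub_self, zero_mulVec]
  have hDu : D *ᵥ (μ - S *ᵥ πstar) = 0 := by
    rw [hπ, mulVec_add, mulVec_smul, mulVec_sub, mulVec_add, mulVec_smul,
      mulVec_mulVec, mulVec_mulVec, mulVec_mulVec, hDSA, hDSc, smul_zero, add_zero, sub_self]
  have hconst : ∀ j : Fin d, (μ - S *ᵥ πstar) j = (μ - S *ᵥ πstar) jlast := by
    intro j
    by_cases hj : (j : ℕ) = d - 1
    · rw [(heq1 j).mp hj]
    · have hjlt : (j : ℕ) < d - 1 := by have := j.isLt; omega
      have h0 := congrFun hDu ⟨(j : ℕ), hjlt⟩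
      rw [hDrow] at h0
      have hj' : emb ⟨(j : ℕ), hjlt⟩ = j := Fin.ext rfl
      rw [hj'] at h0
      simp only [Pi.zero_apply] at h0
      linarith
  have huc : (μ - S *ᵥ πstar) = (μ - S *ᵥ πstar) jlast • (fun _ : Fin d => (1:ℝ)) := by
    funext j
    rw [hconst j]
    simp
  have hOrth : ∀ v : Fin d → ℝ, v ⬝ᵥ (fun _ => (1:ℝ)) = 0 →
      v ⬝ᵥ ((μ - r • (1 : Fin d → ℝ)) - S *ᵥ πstar) = 0 := by
    intro v hv
    rw [sub_right_comm, dotProduct_sub, huc, dotProduct_smul, hv, dotProduct_smul]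
    have : v ⬝ᵥ (1 : Fin d → ℝ) = v ⬝ᵥ (fun _ => (1:ℝ)) := rfl
    rw [this, hv]
    simp
  -- rewrite F via the quadratic form in S
  have hquad : ∀ π : Fin d → ℝ, (σᵀ *ᵥ π) ⬝ᵥ (σᵀ *ᵥ π) = π ⬝ᵥ (S *ᵥ π) := by
    intro π
    rw [hSdef]
    conv_rhs => rw [← mulVec_mulVec, dotProduct_mulVec]
    rw [← mulVec_transpose]
  set b : Fin d → ℝ := μ - r • (1 : Fin d → ℝ) with hb
  have hFeq : ∀ p : Fin d → ℝ,
      F p = Real.log x₀ + T * (r + (p ⬝ᵥ b - (1/2) * (p ⬝ᵥ (S *ᵥ p)))) := by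
    intro p
    rw [hF]
    simp only
    rw [hquad p]
    ring
  have hsw : ∀ x v : Fin d → ℝ, v ⬝ᵥ (S *ᵥ x) = x ⬝ᵥ (S *ᵥ v) := by
    intro x v
    rw [dotProduct_mulVec, ← mulVec_transpose, hsym, dotProduct_comm]
  have hquadExp : ∀ x v : Fin d → ℝ,
      (x + v) ⬝ᵥ b - (1/2) * ((x + v) ⬝ᵥ (S *ᵥ (x + v)))
      = (x ⬝ᵥ b - (1/2) * (x ⬝ᵥ (S *ᵥ x))) + v ⬝ᵥ (b - S *ᵥ x)
        - (1/2) * (v ⬝ᵥ (S *ᵥ v)) := by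
    intro x v
    simp only [mulVec_add, dotProduct_add, add_dotProduct, dotProduct_sub]
    rw [hsw x v]
    ring
  have hKey : ∀ π : Fin d → ℝ, π ⬝ᵥ (fun _ => (1:ℝ)) = h →
      F π = F πstar - T * ((1/2) * ((π - πstar) ⬝ᵥ (S *ᵥ (π - πstar)))) := by
    intro π hcon
    have hv1 : (π - πstar) ⬝ᵥ (fun _ => (1:ℝ)) = 0 := by
      rw [sub_dotProduct, hcon, hstar1, sub_self]
    have hsplit : π = πstar + (π - πstar) := by ring
    have h2 : π ⬝ᵥ b - (1/2) * (π ⬝ᵥ (S *ᵥ π))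
        = (πstar ⬝ᵥ b - (1/2) * (πstar ⬝ᵥ (S *ᵥ πstar)))
          + (π - πstar) ⬝ᵥ (b - S *ᵥ πstar)
          - (1/2) * ((π - πstar) ⬝ᵥ (S *ᵥ (π - πstar))) := by
      conv_lhs => rw [hsplit]
      exact hquadExp πstar (π - πstar)
    rw [hFeq, hFeq, h2, hOrth _ hv1]
    ring
  refine ⟨hstar1, ?_, ?_⟩
  · intro π hcon
    rw [hKey π hcon]
    have hq : 0 ≤ (π - πstar) ⬝ᵥ (S *ᵥ (π - πstar)) := by
      by_cases hv : π - πstar = 0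
      · rw [hv]; simp
      · have := (posDef_iff_dotProduct_mulVec.mp hS).2 (x := π - πstar) hv
        simp only [star_trivial] at this
        linarith
    nlinarith
  · intro π hcon hFeq'
    rw [hKey π hcon] at hFeq'
    have hq0 : (π - πstar) ⬝ᵥ (S *ᵥ (π - πstar)) = 0 := by
      have h2' : T * ((1/2) * ((π - πstar) ⬝ᵥ (S *ᵥ (π - πstar)))) = 0 := by linarith
      rcases mul_eq_zero.mp h2' with h0 | h0
      · exact absurd h0 (ne_of_gt hT)
      · linarith
    by_contra hne
    have hv : π - πstar ≠ 0 := fun h0 => hne (by rwa [sub_eq_zero] at h0)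
    have := (posDef_iff_dotProduct_mulVec.mp hS).2 (x := π - πstar) hv
    simp only [star_trivial] at this
    rw [hq0] at this
    exact lt_irrefl 0 this
end

section
/- For γ < 1, the maximizer of g(π) = πᵀ(μ - r𝟙_d) - ((1-γ)/2)πᵀΣπ over the hyperplane {π ∈ ℝ^d : 𝟙_dᵀπ = h} equals π* = (1/(1-γ))Aμ + hc, with A = Dᵀ(DΣDᵀ)⁻¹D and c = (I_d - AΣ)e_d. -/
open Matrix

/-- For `γ < 1`, the maximizer of `g(π) = πᵀ(μ - r𝟙) - ((1-γ)/2)πᵀΣπ` over the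
hyperplane `{π : 𝟙ᵀπ = h}` equals `π* = (1/(1-γ))Aμ + hc`. -/
theorem stmt14 (d : ℕ) (hd : 2 ≤ d)
    (S : Matrix (Fin d) (Fin d) ℝ) (hS : S.PosDef)
    (μ : Fin d → ℝ) (r h γ : ℝ) (hh : 0 < h) (hγ : γ < 1)
    (D : Matrix (Fin (d - 1)) (Fin d) ℝ)
    (hD : ∀ i j, D i j =
      if (j : ℕ) = (i : ℕ) then 1 else if (j : ℕ) = d - 1 then -1 else 0)
    (A : Matrix (Fin d) (Fin d) ℝ) (hA : A = Dᵀ * (D * S * Dᵀ)⁻¹ * D)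
    (c : Fin d → ℝ)
    (hc : c = (1 - A * S) *ᵥ (fun j : Fin d => if (j : ℕ) = d - 1 then (1:ℝ) else 0))
    (g : (Fin d → ℝ) → ℝ)
    (hg : g = fun π => π ⬝ᵥ (μ - r • (1 : Fin d → ℝ)) -
      ((1 - γ) / 2) * (π ⬝ᵥ (S *ᵥ π)))
    (πstar : Fin d → ℝ) (hπ : πstar = (1 / (1 - γ)) • (A *ᵥ μ) + h • c) :
    πstar ⬝ᵥ (fun _ => 1) = h ∧
    (∀ π : Fin d → ℝ, π ⬝ᵥ (fun _ => 1) = h → g π ≤ g πstar) ∧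
    (∀ π : Fin d → ℝ, π ⬝ᵥ (fun _ => 1) = h → g π = g πstar → π = πstar) := by
  have h1γ : (0:ℝ) < 1 - γ := by linarith
  have hne : (1:ℝ) - γ ≠ 0 := ne_of_gt h1γ
  have hd1 : d - 1 < d := by omega
  set e : Fin d → ℝ := fun j => if (j : ℕ) = d - 1 then 1 else 0 with he
  set last : Fin d := ⟨d - 1, hd1⟩ with hlast
  have hemb : ∀ i : Fin (d-1), (i : ℕ) < d := fun i => lt_trans i.2 hd1
  -- row formula for D
  have hDrow : ∀ (i : Fin (d-1)) (w : Fin d → ℝ),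
      (D *ᵥ w) i = w ⟨i, hemb i⟩ - w last := by
    intro i w
    have hil : (i : ℕ) ≠ d - 1 := Nat.ne_of_lt i.2
    have key : ∀ j : Fin d, D i j * w j =
        (if j = (⟨i, hemb i⟩ : Fin d) then w j else 0) +
        (if j = last then -w j else 0) := by
      intro j
      rw [hD]
      rcases eq_or_ne (j : ℕ) (i : ℕ) with h1 | h1
      · have h2 : (j : ℕ) ≠ d - 1 := h1 ▸ hil
        simp [h1, h2, hil, Fin.ext_iff, hlast]
      · rcases eq_or_ne (j : ℕ) (d - 1) with h2 | h2
        · simp [h1, h2, hil, Ne.symm hil, Fin.ext_iff, hlast]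
        · simp [h1, h2, hil, Fin.ext_iff, hlast]
    simp only [mulVec, dotProduct]
    rw [Finset.sum_congr rfl (fun j _ => key j), Finset.sum_add_distrib,
      Finset.sum_ite_eq' Finset.univ (⟨i, hemb i⟩ : Fin d) w,
      Finset.sum_ite_eq' Finset.univ last (fun j => -w j)]
    simp [sub_eq_add_neg]
  -- D annihilates the ones vector
  have hDones : D *ᵥ (fun _ => (1:ℝ)) = 0 := by
    funext i; rw [hDrow]; simp
  -- kernel of D is constants
  have hker : ∀ w : Fin d → ℝ, D *ᵥ w = 0 → ∀ j : Fin d, w j = w last := by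
    intro w hw j
    rcases eq_or_ne (j : ℕ) (d - 1) with h2 | h2
    · have : j = last := Fin.ext_iff.mpr (by simpa [hlast] using h2)
      rw [this]
    · have hjlt : (j : ℕ) < d - 1 := by omega
      have := congrFun hw ⟨j, hjlt⟩
      rw [hDrow] at this
      simpa [sub_eq_zero] using this
  -- Dᵀ mulVec formula
  have hDt : ∀ (x : Fin (d-1) → ℝ) (i : Fin (d-1)),
      (Dᵀ *ᵥ x) ⟨i, hemb i⟩ = x i := by
    intro x i
    simp only [mulVec, dotProduct, transpose_apply]
    have key : ∀ k : Fin (d-1), D k ⟨i, hemb i⟩ * x k =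
        if k = i then x k else 0 := by
      intro k
      rw [hD]
      rcases eq_or_ne (k : ℕ) (i : ℕ) with h1 | h1
      · have hki : k = i := Fin.ext_iff.mpr h1
        simp [hki, h1]
      · have hki : k ≠ i := fun hcon => h1 (congrArg Fin.val hcon)
        have h2 : (i : ℕ) ≠ d - 1 := Nat.ne_of_lt i.2
        simp [Ne.symm h1, h2, hki]
    rw [Finset.sum_congr rfl (fun k _ => key k),
      Finset.sum_ite_eq' Finset.univ i x]
    simp
  have hDtinj : ∀ x : Fin (d-1) → ℝ, Dᵀ *ᵥ x = 0 → x = 0 := by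
    intro x hx
    funext i
    have := congrFun hx ⟨i, hemb i⟩
    rw [hDt] at this
    simpa using this
  -- W = D S Dᵀ is positive definite
  have hWpd : (D * S * Dᵀ).PosDef := by
    refine Matrix.PosDef.of_dotProduct_mulVec_pos ?_ ?_
    · have h1 : Dᴴ = Dᵀ := conjTranspose_eq_transpose_of_trivial D
      have := isHermitian_mul_mul_conjTranspose D hS.1
      rwa [h1] at this
    · intro x hx
      have hx2 : Dᵀ *ᵥ x ≠ 0 := fun hcon => hx (hDtinj x hcon)
      have := hS.dotProduct_mulVec_pos hx2
      have heq : star x ⬝ᵥ ((D * S * Dᵀ) *ᵥ x) =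
          star (Dᵀ *ᵥ x) ⬝ᵥ (S *ᵥ (Dᵀ *ᵥ x)) := by
        have h1 : ((D * S * Dᵀ) *ᵥ x) = D *ᵥ (S *ᵥ (Dᵀ *ᵥ x)) := by
          simp [mulVec_mulVec, Matrix.mul_assoc]
        rw [star_trivial, star_trivial, h1, dotProduct_mulVec, ← mulVec_transpose]
      rw [heq]
      simpa using this
  have hWunit : IsUnit (D * S * Dᵀ).det :=
    (Matrix.isUnit_iff_isUnit_det _).1 hWpd.isUnit
  have hWinv : (D * S * Dᵀ) * (D * S * Dᵀ)⁻¹ = 1 := Matrix.mul_nonsing_inv _ hWunit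
  -- key identity D S A = D
  have hDSA : D * S * A = D := by
    rw [hA]
    calc D * S * (Dᵀ * (D * S * Dᵀ)⁻¹ * D)
        = (D * S * Dᵀ) * (D * S * Dᵀ)⁻¹ * D := by
          simp only [Matrix.mul_assoc]
      _ = D := by rw [hWinv, Matrix.one_mul]
  -- ones annihilates A from the left
  have honesA : (fun _ : Fin d => (1:ℝ)) ᵥ* A = 0 := by
    rw [hA, ← Matrix.vecMul_vecMul, ← Matrix.vecMul_vecMul, vecMul_transpose, hDones]
    simp
  -- feasibility
  have hfeas : πstar ⬝ᵥ (fun _ => (1:ℝ)) = h := by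
    rw [hπ]
    have h1 : (A *ᵥ μ) ⬝ᵥ (fun _ : Fin d => (1:ℝ)) = 0 := by
      rw [dotProduct_comm, dotProduct_mulVec, honesA, zero_dotProduct]
    have h2 : c ⬝ᵥ (fun _ : Fin d => (1:ℝ)) = 1 := by
      rw [hc, dotProduct_comm, dotProduct_mulVec, Matrix.vecMul_sub,
        Matrix.vecMul_one, ← Matrix.vecMul_vecMul, honesA]
      simp only [Matrix.zero_vecMul, sub_zero]
      have hsum : (fun _ : Fin d => (1:ℝ)) ⬝ᵥ e = ∑ j : Fin d,
          (if j = last then (1:ℝ) else 0) := by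
        simp only [dotProduct, he, one_mul]
        refine Finset.sum_congr rfl fun j _ => ?_
        rcases eq_or_ne (j:ℕ) (d-1) with h3 | h3
        · simp [h3, Fin.ext_iff, hlast]
        · simp [h3, Fin.ext_iff, hlast]
      rw [hsum, Finset.sum_ite_eq' Finset.univ last (fun _ => (1:ℝ))]
      simp
    rw [add_dotProduct, smul_dotProduct, smul_dotProduct, h1, h2]
    simp
  -- gradient vector w is in kernel of D
  set w : Fin d → ℝ := μ - r • (1 : Fin d → ℝ) - (1 - γ) • (S *ᵥ πstar) with hw
  have hDones1 : D *ᵥ (1 : Fin d → ℝ) = 0 := hDones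
  have hDSc : (D * S) *ᵥ c = 0 := by
    rw [hc, mulVec_mulVec]
    have : D * S * (1 - A * S) = 0 := by
      rw [Matrix.mul_sub, Matrix.mul_one, ← Matrix.mul_assoc, hDSA, sub_self]
    rw [this, Matrix.zero_mulVec]
  have hDw : D *ᵥ w = 0 := by
    rw [hw]
    have e1 : D *ᵥ (S *ᵥ (A *ᵥ μ)) = D *ᵥ μ := by
      rw [mulVec_mulVec, mulVec_mulVec, hDSA]
    have e2 : D *ᵥ (S *ᵥ c) = 0 := by rw [mulVec_mulVec, hDSc]
    have h3 : D *ᵥ (S *ᵥ πstar) = (1/(1-γ)) • (D *ᵥ μ) := by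
      simp only [hπ, Matrix.mulVec_add, Matrix.mulVec_smul, e1, e2, smul_zero, add_zero]
    rw [Matrix.mulVec_sub, Matrix.mulVec_sub, Matrix.mulVec_smul, Matrix.mulVec_smul,
      hDones1, h3, smul_smul]
    rw [mul_one_div, div_self hne]
    simp
  have hwconst : ∀ j : Fin d, w j = w last := hker w hDw
  -- orthogonality of w with mean-zero vectors
  have hvw : ∀ v : Fin d → ℝ, v ⬝ᵥ (fun _ => (1:ℝ)) = 0 → v ⬝ᵥ w = 0 := by
    intro v hv
    have : v ⬝ᵥ w = (v ⬝ᵥ (fun _ => (1:ℝ))) * w last := by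
      simp only [dotProduct, Finset.sum_mul]
      exact Finset.sum_congr rfl fun j _ => by rw [hwconst j]; ring
    rw [this, hv, zero_mul]
  -- symmetry of S
  have hSsymm : ∀ x : Fin d → ℝ, x ᵥ* S = S *ᵥ x := by
    intro x
    have h1 : Sᵀ = S := by
      have := hS.1
      rwa [IsHermitian, conjTranspose_eq_transpose_of_trivial] at this
    rw [← h1, vecMul_transpose, h1]
  -- main expansion
  have hmain : ∀ π : Fin d → ℝ, π ⬝ᵥ (fun _ => (1:ℝ)) = h →
      g π = g πstar - ((1 - γ)/2) * ((π - πstar) ⬝ᵥ (S *ᵥ (π - πstar))) := by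
    intro π hπ1
    set v : Fin d → ℝ := π - πstar with hv
    have hvones : v ⬝ᵥ (fun _ => (1:ℝ)) = 0 := by
      rw [hv, sub_dotProduct, hπ1, hfeas, sub_self]
    have hvw0 : v ⬝ᵥ w = 0 := hvw v hvones
    have hπeq : π = πstar + v := by rw [hv]; ring
    have hcross : πstar ⬝ᵥ (S *ᵥ v) = v ⬝ᵥ (S *ᵥ πstar) := by
      rw [dotProduct_mulVec, hSsymm, dotProduct_comm]
    have hwdot : v ⬝ᵥ w = v ⬝ᵥ (μ - r • (1 : Fin d → ℝ)) - (1-γ) * (v ⬝ᵥ (S *ᵥ πstar)) := by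
      rw [hw, dotProduct_sub, dotProduct_smul, smul_eq_mul]
    simp only [hg]
    rw [hπeq]
    simp only [Matrix.mulVec_add, dotProduct_add, add_dotProduct]
    linear_combination hvw0 - hwdot - ((1-γ)/2) * hcross
  refine ⟨hfeas, fun π hπ1 => ?_, fun π hπ1 heq => ?_⟩
  · rw [hmain π hπ1]
    have hq : 0 ≤ (π - πstar) ⬝ᵥ (S *ᵥ (π - πstar)) := by
      have := hS.posSemidef.dotProduct_mulVec_nonneg (π - πstar)
      simpa using this
    nlinarith
  · rw [hmain π hπ1] at heq
    have hq0 : (π - πstar) ⬝ᵥ (S *ᵥ (π - πstar)) = 0 := by nlinarith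
    by_contra hcon
    have hv0 : π - πstar ≠ 0 := fun hc => hcon (by rwa [sub_eq_zero] at hc)
    have := hS.dotProduct_mulVec_pos hv0
    simp only [star_trivial] at this
    linarith [hq0 ▸ this]
end

section
/- For each κ > 0, the equation ‖τ⁻¹(μ*(ψ) - ν)‖ = κ, where μ*(ψ) = ν - τ Σᵢ (λᵢ/(1-γ) + h/(ψ‖τ⁻¹𝟙_d‖))⁻¹ ⟨hτᵀc + (λᵢ/(1-γ))τ⁻¹ν, vᵢ⟩ vᵢ, has at most one solution ψ ∈ (0, κ]; equivalently, the map ψ ↦ ‖τ⁻¹(μ*(ψ) - ν)‖ = ‖Σᵢ (λᵢ/(1-γ) + h/(ψ‖τ⁻¹𝟙_d‖))⁻¹ bᵢ vᵢ‖ with bᵢ = ⟨hτᵀc + (λᵢ/(1-γ))τ⁻¹ν, vᵢ⟩ is nondecreasing in ψ on (0, ∞), and strictly increasing unless all bᵢ = 0. -/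
open Matrix

/-- The map `ψ ↦ ‖τ⁻¹(μ*(ψ)-ν)‖ = √(Σᵢ (λᵢ/(1-γ) + h/(ψ‖τ⁻¹𝟙‖))⁻² bᵢ²)` is
nondecreasing on `(0,∞)`, strictly increasing unless all `bᵢ = 0`, so the equation
`g(ψ) = κ` has at most one solution `ψ ∈ (0,κ]`. -/
theorem stmt16 (d : ℕ) (τ : Matrix (Fin d) (Fin d) ℝ) (hτ : IsUnit τ.det)
    (ν c : Fin d → ℝ) (h γ κ : ℝ) (hh : 0 < h) (hγ : γ < 1) (hκ : 0 < κ)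
    (lam : Fin d → ℝ) (hlam : ∀ i, 0 ≤ lam i)
    (v : Fin d → Fin d → ℝ)
    (horth : ∀ i j, v i ⬝ᵥ v j = if i = j then 1 else 0)
    (b : Fin d → ℝ)
    (hb : b = fun i => (h • (τᵀ *ᵥ c) + (lam i / (1 - γ)) • (τ⁻¹ *ᵥ ν)) ⬝ᵥ v i)
    (N : ℝ) (hNpos : 0 < N)
    (hN : N = Real.sqrt ((τ⁻¹ *ᵥ (fun _ => 1 : Fin d → ℝ)) ⬝ᵥ
      (τ⁻¹ *ᵥ (fun _ => 1 : Fin d → ℝ))))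
    (g : ℝ → ℝ)
    (hg : g = fun ψ =>
      Real.sqrt (∑ i, ((lam i / (1 - γ) + h / (ψ * N))⁻¹ * b i) ^ 2)) :
    (∀ ψ₁ ψ₂ : ℝ, 0 < ψ₁ → ψ₁ ≤ ψ₂ → g ψ₁ ≤ g ψ₂) ∧
    ((∃ i, b i ≠ 0) → ∀ ψ₁ ψ₂ : ℝ, 0 < ψ₁ → ψ₁ < ψ₂ → g ψ₁ < g ψ₂) ∧
    (∀ ψ₁ ψ₂ : ℝ, ψ₁ ∈ Set.Ioc 0 κ → ψ₂ ∈ Set.Ioc 0 κ →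
      g ψ₁ = κ → g ψ₂ = κ → ψ₁ = ψ₂) := by
  have h1γ : 0 < 1 - γ := by linarith
  have hapos : ∀ i, 0 ≤ lam i / (1 - γ) := fun i => div_nonneg (hlam i) h1γ.le
  have hfpos : ∀ ψ : ℝ, 0 < ψ → ∀ i, 0 < lam i / (1 - γ) + h / (ψ * N) := by
    intro ψ hψ i
    have : 0 < h / (ψ * N) := div_pos hh (mul_pos hψ hNpos)
    linarith [hapos i]
  have hinv_le : ∀ ψ₁ ψ₂ : ℝ, 0 < ψ₁ → ψ₁ ≤ ψ₂ → ∀ i,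
      (lam i / (1 - γ) + h / (ψ₁ * N))⁻¹ ≤ (lam i / (1 - γ) + h / (ψ₂ * N))⁻¹ := by
    intro ψ₁ ψ₂ h1 h12 i
    have h2 : 0 < ψ₂ := lt_of_lt_of_le h1 h12
    have hden : lam i / (1 - γ) + h / (ψ₂ * N) ≤ lam i / (1 - γ) + h / (ψ₁ * N) := by
      have := div_le_div_of_nonneg_left hh.le (mul_pos h1 hNpos)
        (mul_le_mul_of_nonneg_right h12 hNpos.le)
      linarith
    exact inv_anti₀ (hfpos ψ₂ h2 i) hden
  have hinv_lt : ∀ ψ₁ ψ₂ : ℝ, 0 < ψ₁ → ψ₁ < ψ₂ → ∀ i,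
      (lam i / (1 - γ) + h / (ψ₁ * N))⁻¹ < (lam i / (1 - γ) + h / (ψ₂ * N))⁻¹ := by
    intro ψ₁ ψ₂ h1 h12 i
    have h2 : 0 < ψ₂ := lt_trans h1 h12
    have hden : lam i / (1 - γ) + h / (ψ₂ * N) < lam i / (1 - γ) + h / (ψ₁ * N) := by
      have := div_lt_div_of_pos_left hh (mul_pos h1 hNpos)
        (mul_lt_mul_of_pos_right h12 hNpos)
      linarith
    exact inv_strictAnti₀ (hfpos ψ₂ h2 i) hden
  have hterm_le : ∀ ψ₁ ψ₂ : ℝ, 0 < ψ₁ → ψ₁ ≤ ψ₂ → ∀ i,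
      ((lam i / (1 - γ) + h / (ψ₁ * N))⁻¹ * b i) ^ 2 ≤
      ((lam i / (1 - γ) + h / (ψ₂ * N))⁻¹ * b i) ^ 2 := by
    intro ψ₁ ψ₂ h1 h12 i
    rw [mul_pow, mul_pow]
    have hx : 0 ≤ (lam i / (1 - γ) + h / (ψ₁ * N))⁻¹ := (inv_pos.mpr (hfpos ψ₁ h1 i)).le
    exact mul_le_mul_of_nonneg_right
      (pow_le_pow_left₀ hx (hinv_le ψ₁ ψ₂ h1 h12 i) 2) (sq_nonneg _)
  have hmono : ∀ ψ₁ ψ₂ : ℝ, 0 < ψ₁ → ψ₁ ≤ ψ₂ → g ψ₁ ≤ g ψ₂ := by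
    intro ψ₁ ψ₂ h1 h12
    rw [hg]
    exact Real.sqrt_le_sqrt (Finset.sum_le_sum fun i _ => hterm_le ψ₁ ψ₂ h1 h12 i)
  have hstrict : (∃ i, b i ≠ 0) → ∀ ψ₁ ψ₂ : ℝ, 0 < ψ₁ → ψ₁ < ψ₂ → g ψ₁ < g ψ₂ := by
    rintro ⟨i₀, hi₀⟩ ψ₁ ψ₂ h1 h12
    rw [hg]
    apply Real.sqrt_lt_sqrt (Finset.sum_nonneg fun i _ => sq_nonneg _)
    apply Finset.sum_lt_sum (fun i _ => hterm_le ψ₁ ψ₂ h1 h12.le i)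
    refine ⟨i₀, Finset.mem_univ _, ?_⟩
    rw [mul_pow, mul_pow]
    have hx : 0 ≤ (lam i₀ / (1 - γ) + h / (ψ₁ * N))⁻¹ := (inv_pos.mpr (hfpos ψ₁ h1 i₀)).le
    exact mul_lt_mul_of_pos_right
      (pow_lt_pow_left₀ (hinv_lt ψ₁ ψ₂ h1 h12 i₀) hx (by norm_num))
      ((sq_nonneg (b i₀)).lt_of_ne (Ne.symm (pow_ne_zero 2 hi₀)))
  refine ⟨hmono, hstrict, ?_⟩
  intro ψ₁ ψ₂ hm1 hm2 hg1 hg2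
  by_cases hbz : ∃ i, b i ≠ 0
  · rcases lt_trichotomy ψ₁ ψ₂ with hlt | heq | hgt
    · have := hstrict hbz ψ₁ ψ₂ hm1.1 hlt
      rw [hg1, hg2] at this; linarith
    · exact heq
    · have := hstrict hbz ψ₂ ψ₁ hm2.1 hgt
      rw [hg1, hg2] at this; linarith
  · push_neg at hbz
    exfalso
    have : g ψ₁ = 0 := by
      rw [hg]
      simp [hbz]
    linarith [hg1 ▸ this]
end
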